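/- For $\nu > 1$ and a nonnegative integer $k$, the function $\phi(z) = \sin(z)\cos^\nu(z)\, {}_2F_1(-k, \nu+k+1; \nu+\tfrac12; \cos^2 z)$ satisfies $-\phi''(z) + \nu(\nu-1)\tan^2(z)\,\phi(z) = \epsilon\,\phi(z)$ on $(-\pi/2, \pi/2)$ with $\epsilon = (2k+1)(2\nu+2k+1)+\nu$, and $\phi(\pm\pi/2)=0$. -/

import Mathlib

/-- Terminating hypergeometric polynomial ₂F₁(-k, b; c; x). -/
noncomputable def hyp2F1term (k : ℕ) (b c x : ℝ) : ℝ :=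
  ∑ j ∈ Finset.range (k + 1),
    ((ascPochhammer ℝ j).eval (-(k : ℝ)) * (ascPochhammer ℝ j).eval b /
      ((ascPochhammer ℝ j).eval c * (Nat.factorial j))) * x ^ j

lemma cos_rpow_split (μ z : ℝ) (hz : 0 < Real.cos z) :
    Real.cos z ^ μ = Real.cos z ^ (μ - 2) * Real.cos z ^ (2 : ℕ) := by
  rw [← Real.rpow_natCast (Real.cos z) 2, ← Real.rpow_add hz]
  norm_num

lemma hasDerivAt_g (μ z : ℝ) (hz : 0 < Real.cos z) :
    HasDerivAt (fun w => Real.sin w * Real.cos w ^ μ)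
      (Real.cos z ^ (μ + 1) - μ * Real.sin z ^ 2 * Real.cos z ^ (μ - 1)) z := by
  have h1 : HasDerivAt (fun w => Real.cos w ^ μ)
      (-Real.sin z * μ * Real.cos z ^ (μ - 1)) z :=
    (Real.hasDerivAt_cos z).rpow_const (Or.inl hz.ne')
  have h2 := (Real.hasDerivAt_sin z).mul h1
  refine h2.congr_deriv ?_
  rw [Real.rpow_add_one hz.ne']
  ring

lemma hasDerivAt_g' (μ z : ℝ) (hz : 0 < Real.cos z) :
    HasDerivAt (fun w => Real.cos w ^ (μ + 1) - μ * Real.sin w ^ 2 * Real.cos w ^ (μ - 1))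
      (μ * (μ - 1) * Real.sin z * Real.cos z ^ (μ - 2)
        - (μ + 1) ^ 2 * Real.sin z * Real.cos z ^ μ) z := by
  have h1 : HasDerivAt (fun w => Real.cos w ^ (μ + 1))
      (-Real.sin z * (μ + 1) * Real.cos z ^ (μ + 1 - 1)) z :=
    (Real.hasDerivAt_cos z).rpow_const (Or.inl hz.ne')
  have h2 : HasDerivAt (fun w => Real.sin w ^ 2)
      ((2 : ℕ) * Real.sin z ^ (2 - 1) * Real.cos z) z :=
    (Real.hasDerivAt_sin z).pow 2
  have h3 : HasDerivAt (fun w => Real.cos w ^ (μ - 1))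
      (-Real.sin z * (μ - 1) * Real.cos z ^ (μ - 1 - 1)) z :=
    (Real.hasDerivAt_cos z).rpow_const (Or.inl hz.ne')
  have h4 := h1.sub ((h2.mul h3).const_mul μ)
  rw [show (fun w => Real.cos w ^ (μ + 1) - μ * Real.sin w ^ 2 * Real.cos w ^ (μ - 1)) =
      (fun w => Real.cos w ^ (μ + 1) - μ * (Real.sin w ^ 2 * Real.cos w ^ (μ - 1))) by
    ext w; ring]
  refine h4.congr_deriv ?_
  have e1 : μ + 1 - 1 = μ := by ring
  have e2 : μ - 1 - 1 = μ - 2 := by ring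
  rw [e1, e2]
  have hB : Real.cos z ^ (μ - 1) = Real.cos z ^ (μ - 2) * Real.cos z := by
    rw [show μ - 1 = μ - 2 + 1 by ring, Real.rpow_add_one hz.ne']
  have hC := cos_rpow_split μ z hz
  have hs : Real.sin z ^ 2 = 1 - Real.cos z ^ 2 := Real.sin_sq z
  rw [hB, hC, hs]
  push_cast
  ring

lemma tan_sq_mul (μ z : ℝ) (hz : 0 < Real.cos z) :
    Real.tan z ^ 2 * (Real.sin z * Real.cos z ^ μ) =
      Real.sin z * Real.cos z ^ (μ - 2) - Real.sin z * Real.cos z ^ μ := by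
  have hC := cos_rpow_split μ z hz
  have hs : Real.sin z ^ 2 = 1 - Real.cos z ^ 2 := Real.sin_sq z
  rw [Real.tan_eq_sin_div_cos, div_pow, hC]
  field_simp
  linear_combination (Real.sin z) * hs

lemma coeff_rec (ν : ℝ) (hν : 1 < ν) (k j : ℕ) :
    ((ascPochhammer ℝ (j+1)).eval (-(k : ℝ)) * (ascPochhammer ℝ (j+1)).eval (ν + k + 1) /
        ((ascPochhammer ℝ (j+1)).eval (ν + 1/2) * (Nat.factorial (j+1)))) *
      (ν * (ν - 1) - (ν + 2 * ((j : ℝ) + 1)) * (ν + 2 * ((j : ℝ) + 1) - 1))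
    + ((ascPochhammer ℝ j).eval (-(k : ℝ)) * (ascPochhammer ℝ j).eval (ν + k + 1) /
        ((ascPochhammer ℝ j).eval (ν + 1/2) * (Nat.factorial j))) *
      ((ν + 2 * (j : ℝ) + 1) ^ 2 - ν * (ν - 1) - ((2 * (k : ℝ) + 1) * (2 * ν + 2 * k + 1) + ν)) = 0 := by
  have hc : 0 < (ascPochhammer ℝ j).eval (ν + 1/2) :=
    ascPochhammer_pos j _ (by linarith)
  have hc' : (ascPochhammer ℝ j).eval (ν + 1/2) ≠ 0 := hc.ne'
  have hf : ((Nat.factorial j : ℝ)) ≠ 0 := by positivity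
  have hd : ν + 1/2 + (j : ℝ) ≠ 0 := by positivity
  have hj1 : ((j : ℝ) + 1) ≠ 0 := by positivity
  have hstep :
      ((ascPochhammer ℝ (j+1)).eval (-(k : ℝ)) * (ascPochhammer ℝ (j+1)).eval (ν + k + 1) /
          ((ascPochhammer ℝ (j+1)).eval (ν + 1/2) * (Nat.factorial (j+1)))) *
        (4 * ((ν + 1/2 + (j : ℝ)) * ((j : ℝ) + 1)))
      = ((ascPochhammer ℝ j).eval (-(k : ℝ)) * (ascPochhammer ℝ j).eval (ν + k + 1) /
          ((ascPochhammer ℝ j).eval (ν + 1/2) * (Nat.factorial j))) *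
        (4 * ((-(k : ℝ) + (j : ℝ)) * (ν + (k : ℝ) + 1 + (j : ℝ)))) := by
    simp only [ascPochhammer_succ_right, Polynomial.eval_mul, Polynomial.eval_add,
      Polynomial.eval_X, Polynomial.eval_natCast, Nat.factorial_succ]
    push_cast
    set p := (ascPochhammer ℝ j).eval (-(k:ℝ)) with hp
    set q := (ascPochhammer ℝ j).eval (ν + (k:ℝ) + 1) with hq
    set r := (ascPochhammer ℝ j).eval (ν + 1/2) with hr
    set f := ((Nat.factorial j : ℝ)) with hfa
    field_simp
  linear_combination -hstep

theorem gup_oscillator_odd_eigenfunctions (ν : ℝ) (hν : 1 < ν) (k : ℕ) :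
    let φ : ℝ → ℝ := fun z =>
      Real.sin z * Real.cos z ^ ν *
        hyp2F1term k (ν + k + 1) (ν + 1 / 2) (Real.cos z ^ 2)
    let ε : ℝ := (2 * k + 1) * (2 * ν + 2 * k + 1) + ν
    (∀ z ∈ Set.Ioo (-(Real.pi / 2)) (Real.pi / 2),
      -(iteratedDeriv 2 φ z) + ν * (ν - 1) * Real.tan z ^ 2 * φ z = ε * φ z) ∧
    φ (Real.pi / 2) = 0 ∧ φ (-(Real.pi / 2)) = 0 := by
  intro φ ε
  have hν0 : ν ≠ 0 := by positivity
  have hε : ε = (2 * (k : ℝ) + 1) * (2 * ν + 2 * (k : ℝ) + 1) + ν := rfl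
  set a : ℕ → ℝ := fun j =>
    (ascPochhammer ℝ j).eval (-(k : ℝ)) * (ascPochhammer ℝ j).eval (ν + k + 1) /
      ((ascPochhammer ℝ j).eval (ν + 1/2) * (Nat.factorial j)) with ha
  refine ⟨?_, ?_, ?_⟩
  · -- the ODE
    intro z hz
    have hcos : ∀ w ∈ Set.Ioo (-(Real.pi / 2)) (Real.pi / 2), 0 < Real.cos w :=
      fun w hw => Real.cos_pos_of_mem_Ioo hw
    set F : ℝ → ℝ := fun w =>
      ∑ j ∈ Finset.range (k + 1), a j * (Real.sin w * Real.cos w ^ (ν + 2 * (j : ℝ))) with hF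
    have hφF : ∀ w ∈ Set.Ioo (-(Real.pi / 2)) (Real.pi / 2), φ w = F w := by
      intro w hw
      have hc := hcos w hw
      show Real.sin w * Real.cos w ^ ν *
        hyp2F1term k (ν + k + 1) (ν + 1 / 2) (Real.cos w ^ 2) = F w
      rw [hyp2F1term, hF, Finset.mul_sum]
      refine Finset.sum_congr rfl fun j _ => ?_
      have hpow : Real.cos w ^ ν * (Real.cos w ^ 2) ^ j = Real.cos w ^ (ν + 2 * (j : ℝ)) := by
        rw [← pow_mul, ← Real.rpow_natCast (Real.cos w) (2 * j), ← Real.rpow_add hc]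
        congr 1
        push_cast
        ring
      calc Real.sin w * Real.cos w ^ ν *
            ((ascPochhammer ℝ j).eval (-(k : ℝ)) * (ascPochhammer ℝ j).eval (ν + k + 1) /
              ((ascPochhammer ℝ j).eval (ν + 1/2) * (Nat.factorial j)) * (Real.cos w ^ 2) ^ j)
          = a j * (Real.sin w * (Real.cos w ^ ν * (Real.cos w ^ 2) ^ j)) := by rw [ha]; ring
        _ = a j * (Real.sin w * Real.cos w ^ (ν + 2 * (j : ℝ))) := by rw [hpow]
    set F1 : ℝ → ℝ := fun w =>
      ∑ j ∈ Finset.range (k + 1), a j *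
        (Real.cos w ^ (ν + 2 * (j : ℝ) + 1)
          - (ν + 2 * (j : ℝ)) * Real.sin w ^ 2 * Real.cos w ^ (ν + 2 * (j : ℝ) - 1)) with hF1
    have hF_deriv : ∀ w ∈ Set.Ioo (-(Real.pi / 2)) (Real.pi / 2), HasDerivAt F (F1 w) w := by
      intro w hw
      rw [hF, hF1]
      exact HasDerivAt.fun_sum fun j _ =>
        (hasDerivAt_g (ν + 2 * (j : ℝ)) w (hcos w hw)).const_mul (a j)
    have hderiv1 : ∀ w ∈ Set.Ioo (-(Real.pi / 2)) (Real.pi / 2), deriv φ w = F1 w := by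
      intro w hw
      have hev : φ =ᶠ[nhds w] F :=
        Filter.eventuallyEq_of_mem (isOpen_Ioo.mem_nhds hw) hφF
      rw [hev.deriv_eq]
      exact (hF_deriv w hw).deriv
    have hzc := hcos z hz
    have h2 : iteratedDeriv 2 φ z = ∑ j ∈ Finset.range (k + 1), a j *
        ((ν + 2 * (j : ℝ)) * ((ν + 2 * (j : ℝ)) - 1) * Real.sin z *
            Real.cos z ^ ((ν + 2 * (j : ℝ)) - 2)
          - ((ν + 2 * (j : ℝ)) + 1) ^ 2 * Real.sin z * Real.cos z ^ (ν + 2 * (j : ℝ))) := by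
      rw [iteratedDeriv_succ, iteratedDeriv_one]
      have hev : deriv φ =ᶠ[nhds z] F1 :=
        Filter.eventuallyEq_of_mem (isOpen_Ioo.mem_nhds hz) hderiv1
      rw [hev.deriv_eq, hF1]
      have := HasDerivAt.fun_sum (fun j (_ : j ∈ Finset.range (k+1)) =>
        (hasDerivAt_g' (ν + 2 * (j : ℝ)) z hzc).const_mul (a j))
      exact this.deriv
    rw [h2, hφF z hz, ← sub_eq_zero, hF]
    have key : ∀ j ∈ Finset.range (k + 1),
        -(a j * ((ν + 2 * (j : ℝ)) * ((ν + 2 * (j : ℝ)) - 1) * Real.sin z *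
              Real.cos z ^ ((ν + 2 * (j : ℝ)) - 2)
            - ((ν + 2 * (j : ℝ)) + 1) ^ 2 * Real.sin z * Real.cos z ^ (ν + 2 * (j : ℝ))))
          + ν * (ν - 1) * Real.tan z ^ 2 *
              (a j * (Real.sin z * Real.cos z ^ (ν + 2 * (j : ℝ))))
          - ε * (a j * (Real.sin z * Real.cos z ^ (ν + 2 * (j : ℝ))))
        = (a j * (ν * (ν - 1) - (ν + 2 * (j : ℝ)) * ((ν + 2 * (j : ℝ)) - 1))) *
            (Real.sin z * Real.cos z ^ (ν + 2 * (j : ℝ) - 2))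
          + (a j * (((ν + 2 * (j : ℝ)) + 1) ^ 2 - ν * (ν - 1) - ε)) *
            (Real.sin z * Real.cos z ^ (ν + 2 * (j : ℝ))) := by
      intro j _
      have ht := tan_sq_mul (ν + 2 * (j : ℝ)) z hzc
      linear_combination (ν * (ν - 1) * a j) * ht
    calc -(∑ j ∈ Finset.range (k + 1), a j *
            ((ν + 2 * (j : ℝ)) * ((ν + 2 * (j : ℝ)) - 1) * Real.sin z *
                Real.cos z ^ ((ν + 2 * (j : ℝ)) - 2)
              - ((ν + 2 * (j : ℝ)) + 1) ^ 2 * Real.sin z * Real.cos z ^ (ν + 2 * (j : ℝ))))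
          + ν * (ν - 1) * Real.tan z ^ 2 *
            (∑ j ∈ Finset.range (k + 1), a j * (Real.sin z * Real.cos z ^ (ν + 2 * (j : ℝ))))
          - ε * (∑ j ∈ Finset.range (k + 1), a j * (Real.sin z * Real.cos z ^ (ν + 2 * (j : ℝ))))
        = ∑ j ∈ Finset.range (k + 1),
            ((a j * (ν * (ν - 1) - (ν + 2 * (j : ℝ)) * ((ν + 2 * (j : ℝ)) - 1))) *
              (Real.sin z * Real.cos z ^ (ν + 2 * (j : ℝ) - 2))
            + (a j * (((ν + 2 * (j : ℝ)) + 1) ^ 2 - ν * (ν - 1) - ε)) *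
              (Real.sin z * Real.cos z ^ (ν + 2 * (j : ℝ)))) := by
          rw [Finset.mul_sum, Finset.mul_sum, ← Finset.sum_neg_distrib,
            ← Finset.sum_add_distrib, ← Finset.sum_sub_distrib]
          exact Finset.sum_congr rfl key
      _ = 0 := by
          rw [Finset.sum_add_distrib, Finset.sum_range_succ', Finset.sum_range_succ]
          have hD0 : (a 0 * (ν * (ν - 1) - (ν + 2 * ((0:ℕ) : ℝ)) * ((ν + 2 * ((0:ℕ) : ℝ)) - 1))) = 0 := by
            push_cast; ring
          have hEk : (a k * (((ν + 2 * (k : ℝ)) + 1) ^ 2 - ν * (ν - 1) - ε)) = 0 := by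
            rw [hε]; ring
          rw [hD0, hEk, zero_mul, zero_mul, add_zero, add_zero, ← Finset.sum_add_distrib]
          refine Finset.sum_eq_zero fun i hi => ?_
          have hXY : Real.sin z * Real.cos z ^ (ν + 2 * (((i+1):ℕ) : ℝ) - 2)
              = Real.sin z * Real.cos z ^ (ν + 2 * (i : ℝ)) := by
            congr 1
            push_cast
            ring
          rw [hXY, ← add_mul]
          have hrec := coeff_rec ν hν k i
          have hcoef : a (i+1) * (ν * (ν - 1) -
              (ν + 2 * (((i+1):ℕ) : ℝ)) * ((ν + 2 * (((i+1):ℕ) : ℝ)) - 1))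
            + a i * (((ν + 2 * (i : ℝ)) + 1) ^ 2 - ν * (ν - 1) - ε) = 0 := by
            rw [ha, hε]
            push_cast
            push_cast at hrec
            linear_combination hrec
          rw [hcoef, zero_mul]
  · show Real.sin _ * Real.cos _ ^ ν * _ = 0
    rw [Real.cos_pi_div_two, Real.zero_rpow hν0]
    ring
  · show Real.sin _ * Real.cos _ ^ ν * _ = 0
    rw [Real.cos_neg, Real.cos_pi_div_two, Real.zero_rpow hν0]
    ring
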